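/- Let k, N ∈ ℕ with N ≤ k, let s ∈ ℂ with Re s > −N, and let u : ℝ → ℂ be k times continuously differentiable (ContDiff ℝ k u) with u(y) = 0 for all y outside the interval [0,1]. Define v : ℝ → ℂ by v(y) = y^s·u(y) for y > 0 (where y^s is the complex power of the positive real y) and v(y) = 0 for y ≤ 0. Then v is (k − N) times continuously differentiable on ℝ (ContDiff ℝ (k−N) v). -/

import Mathlib

open Set Filter Topology

private lemma zero_at_zero {f : ℝ → ℂ} (hf : ContinuousAt f 0)
    (h : ∀ y < (0:ℝ), f y = 0) : f 0 = 0 := by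
  have h1 : Tendsto f (𝓝[<] (0:ℝ)) (𝓝 (f 0)) :=
    hf.continuousWithinAt.tendsto
  have h2 : Tendsto f (𝓝[<] (0:ℝ)) (𝓝 0) := by
    refine Tendsto.congr' ?_ tendsto_const_nhds
    filter_upwards [self_mem_nhdsWithin] with z hz using (h z hz).symm
  exact tendsto_nhds_unique h1 h2

private lemma deriv_vanish {u : ℝ → ℂ} (hc : Continuous (deriv u))
    (h0 : ∀ y ≤ (0:ℝ), u y = 0) : ∀ y ≤ (0:ℝ), deriv u y = 0 := by
  have hlt : ∀ y < (0:ℝ), deriv u y = 0 := by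
    intro y hy
    have hev : u =ᶠ[𝓝 y] (fun _ => 0) := by
      filter_upwards [Iio_mem_nhds hy] with z hz using h0 z (le_of_lt hz)
    rw [hev.deriv_eq]
    simp
  intro y hy
  rcases lt_or_eq_of_le hy with hy' | hy'
  · exact hlt y hy'
  · subst hy'
    exact zero_at_zero hc.continuousAt hlt

/-- Taylor-type bound: a `C^n` function vanishing on `(-∞,0]` is `O(y^n)` on `[0,1]`. -/
private lemma bound_of_contDiff : ∀ (n : ℕ) (u : ℝ → ℂ), ContDiff ℝ n u →
    (∀ y ≤ (0:ℝ), u y = 0) →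
    ∃ C : ℝ, 0 ≤ C ∧ ∀ y ∈ Icc (0:ℝ) 1, ‖u y‖ ≤ C * y ^ n := by
  intro n
  induction n with
  | zero =>
    intro u hu h0
    obtain ⟨C, hC⟩ := isCompact_Icc.exists_bound_of_continuousOn
      (hu.continuous.continuousOn (s := Icc (0:ℝ) 1))
    refine ⟨max C 0, le_max_right _ _, fun y hy => ?_⟩
    rw [pow_zero, mul_one]; exact (hC y hy).trans (le_max_left _ _)
  | succ n ih =>
    intro u hu h0
    have hu' : ContDiff ℝ ((n : WithTop ℕ∞) + 1) u := by
      exact_mod_cast hu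
    have hdiff : Differentiable ℝ u := (contDiff_succ_iff_deriv.mp hu').1
    have hd : ContDiff ℝ n (deriv u) := (contDiff_succ_iff_deriv.mp hu').2.2
    have hd0 : ∀ y ≤ (0:ℝ), deriv u y = 0 :=
      deriv_vanish (hd.continuous) h0
    obtain ⟨C, hC0, hC⟩ := ih (deriv u) hd hd0
    refine ⟨C, hC0, fun y hy => ?_⟩
    obtain ⟨hy0, hy1⟩ := hy
    have key := norm_image_sub_le_of_norm_deriv_le_segment'
      (f := u) (f' := deriv u) (a := 0) (b := y) (C := C * y ^ n)
      (fun t _ => (hdiff t).hasDerivAt.hasDerivWithinAt)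
      (fun t ht => ?_) y (right_mem_Icc.2 hy0)
    · rw [h0 0 le_rfl, sub_zero, sub_zero] at key
      calc ‖u y‖ ≤ C * y ^ n * y := key
        _ = C * y ^ (n + 1) := by ring
    · have ht0 : 0 ≤ t := ht.1
      have ht1 : t ≤ 1 := le_trans (le_of_lt ht.2) hy1
      calc ‖deriv u t‖ ≤ C * t ^ n := hC t ⟨ht0, ht1⟩
        _ ≤ C * y ^ n := by
            apply mul_le_mul_of_nonneg_left _ hC0
            exact pow_le_pow_left₀ ht0 (le_of_lt ht.2) n

private lemma hasDerivAt_real_cpow {x : ℝ} (hx : 0 < x) (s : ℂ) :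
    HasDerivAt (fun y : ℝ => (y : ℂ) ^ s) (s * (x : ℂ) ^ (s - 1)) x := by
  have h0 : ((x : ℂ)) ∈ Complex.slitPlane := Complex.ofReal_mem_slitPlane.2 hx
  exact (Complex.hasStrictDerivAt_cpow_const h0).hasDerivAt.comp_ofReal

/-- Norm bound for the product. -/
private lemma norm_cpow_mul_le {u : ℝ → ℂ} {C : ℝ} {n : ℕ} (s : ℂ)
    (hB : ∀ y ∈ Icc (0:ℝ) 1, ‖u y‖ ≤ C * y ^ n)
    {y : ℝ} (hy0 : 0 < y) (hy1 : y ≤ 1) :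
    ‖(y : ℂ) ^ s * u y‖ ≤ C * y ^ (s.re + n) := by
  have h1 : ‖(y : ℂ) ^ s‖ = y ^ s.re := by
    rw [Complex.norm_cpow_eq_rpow_re_of_pos hy0]
  rw [norm_mul, h1]
  calc y ^ s.re * ‖u y‖ ≤ y ^ s.re * (C * y ^ n) := by
        apply mul_le_mul_of_nonneg_left (hB y ⟨le_of_lt hy0, hy1⟩)
        positivity
    _ = C * y ^ (s.re + n) := by
        rw [Real.rpow_add hy0, Real.rpow_natCast]; ring

/-- Squeeze to zero along any filter from a power bound. -/
private lemma tendsto_zero_of_bound {f : ℝ → ℂ} {C e : ℝ} (hC : 0 ≤ C) (he : 0 < e)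
    {l : Filter ℝ} (hl : Tendsto (fun y : ℝ => y) l (𝓝 0))
    (hb : ∀ᶠ y in l, ‖f y‖ ≤ C * |y| ^ e) :
    Tendsto f l (𝓝 0) := by
  apply squeeze_zero_norm' hb
  have habs : Tendsto (fun y : ℝ => |y|) l (𝓝 0) := by
    have := continuous_abs.continuousAt.tendsto.comp hl
    rw [abs_zero] at this
    exact this
  have hcpow : ContinuousAt (fun x : ℝ => x ^ e) 0 :=
    Real.continuousAt_rpow_const 0 e (Or.inr (le_of_lt he))
  have h2 : Tendsto (fun y : ℝ => |y| ^ e) l (𝓝 0) := by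
    have := hcpow.tendsto.comp habs
    rwa [Real.zero_rpow (ne_of_gt he)] at this
  simpa using h2.const_mul C

private lemma main_lemma : ∀ (m N : ℕ) (s : ℂ), -(N:ℝ) < s.re → ∀ u : ℝ → ℂ,
    ContDiff ℝ (N + m) u → (∀ y ≤ (0:ℝ), u y = 0) →
    ContDiff ℝ (m : ℕ) (fun y : ℝ => if 0 < y then (y : ℂ) ^ s * u y else 0) := by
  intro m
  induction m with
  | zero =>
    intro N s hs u hu h0
    obtain ⟨C, hC0, hC⟩ := bound_of_contDiff N u (by simpa using hu) h0
    rw [Nat.cast_zero, contDiff_zero, continuous_iff_continuousAt]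
    intro x
    rcases lt_trichotomy x 0 with hx | hx | hx
    · have hev : (fun y : ℝ => if 0 < y then (y : ℂ) ^ s * u y else 0) =ᶠ[𝓝 x]
          (fun _ => 0) := by
        filter_upwards [Iio_mem_nhds hx] with z hz
        rw [if_neg (not_lt.2 (le_of_lt (mem_Iio.mp hz)))]
      exact ContinuousAt.congr continuousAt_const hev.symm
    · subst hx
      have h00 : (if (0:ℝ) < 0 then ((0:ℝ) : ℂ) ^ s * u 0 else 0) = 0 := by simp
      rw [ContinuousAt, h00]
      apply tendsto_zero_of_bound hC0 (show (0:ℝ) < s.re + N by linarith) tendsto_id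
      filter_upwards [Metric.ball_mem_nhds (0:ℝ) one_pos] with y hy
      rw [Real.ball_eq_Ioo] at hy
      by_cases hy0 : 0 < y
      · rw [if_pos hy0, abs_of_pos hy0]
        exact norm_cpow_mul_le s hC hy0 (le_of_lt (by simpa using hy.2))
      · rw [if_neg hy0]
        simp only [norm_zero]
        positivity
    · have hev : (fun y : ℝ => if 0 < y then (y : ℂ) ^ s * u y else 0) =ᶠ[𝓝 x]
          (fun y : ℝ => (y : ℂ) ^ s * u y) := by
        filter_upwards [Ioi_mem_nhds hx] with z hz
        rw [if_pos (mem_Ioi.mp hz)]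
      refine ContinuousAt.congr ?_ hev.symm
      exact (Complex.continuous_ofReal.continuousAt.cpow continuousAt_const
        (Or.inl (by simpa using hx))).mul hu.continuous.continuousAt
  | succ m ih =>
    intro N s hs u hu h0
    have hu1 : ContDiff ℝ ((N + m : ℕ) + 1) u := hu
    have hu1' : ContDiff ℝ (((N + m : ℕ) : WithTop ℕ∞) + 1) u := by exact_mod_cast hu1
    have hdiff : Differentiable ℝ u := (contDiff_succ_iff_deriv.mp hu1').1
    have hd : ContDiff ℝ (N + m : ℕ) (deriv u) := (contDiff_succ_iff_deriv.mp hu1').2.2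
    have hd0 : ∀ y ≤ (0:ℝ), deriv u y = 0 := deriv_vanish hd.continuous h0
    set v : ℝ → ℂ := fun y : ℝ => if 0 < y then (y : ℂ) ^ s * u y else 0 with hv
    set v₁ : ℝ → ℂ := fun y : ℝ =>
      if 0 < y then s * (y : ℂ) ^ (s - 1) * u y + (y : ℂ) ^ s * deriv u y else 0 with hv₁
    -- bound of order N+1 for the derivative-at-zero argument
    obtain ⟨C, hC0, hC⟩ := bound_of_contDiff (N + 1) u
      (hu.of_le (by exact_mod_cast (by omega : N + 1 ≤ N + (m + 1)))) h0
    have hder : ∀ y : ℝ, HasDerivAt v (v₁ y) y := by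
      intro y
      rcases lt_trichotomy y 0 with hy | hy | hy
      · have hev : v =ᶠ[𝓝 y] (fun _ => 0) := by
          filter_upwards [Iio_mem_nhds hy] with z hz
          rw [hv]; simp only
          rw [if_neg (not_lt.2 (le_of_lt (mem_Iio.mp hz)))]
        have h1 : HasDerivAt (fun _ : ℝ => (0:ℂ)) 0 y := hasDerivAt_const y 0
        have := h1.congr_of_eventuallyEq hev
        simpa [hv₁, if_neg (not_lt.2 (le_of_lt hy))] using this
      · subst hy
        have hv0 : v 0 = 0 := by rw [hv]; simp
        have hgoal : v₁ 0 = 0 := by rw [hv₁]; simp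
        rw [hgoal, hasDerivAt_iff_tendsto_slope]
        apply tendsto_zero_of_bound hC0 (show (0:ℝ) < s.re + N by linarith)
          (tendsto_id.mono_left nhdsWithin_le_nhds)
        filter_upwards [inter_mem_nhdsWithin {0}ᶜ (Metric.ball_mem_nhds (0:ℝ) one_pos)]
          with y hy
        obtain ⟨hyne, hyball⟩ := hy
        rw [Real.ball_eq_Ioo] at hyball
        have hslope : slope v 0 y = y⁻¹ • v y := by
          simp only [slope, vsub_eq_sub, hv0, sub_zero]
        by_cases hy0 : 0 < y
        · have hb := norm_cpow_mul_le s hC hy0 (le_of_lt (by simpa using hyball.2))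
          rw [hslope]
          rw [norm_smul, norm_inv, Real.norm_eq_abs, abs_of_pos hy0]
          have hvy : v y = (y : ℂ) ^ s * u y := by rw [hv]; simp only; rw [if_pos hy0]
          rw [hvy]
          calc y⁻¹ * ‖(y : ℂ) ^ s * u y‖ ≤ y⁻¹ * (C * y ^ (s.re + (N + 1 : ℕ))) := by
                apply mul_le_mul_of_nonneg_left hb (by positivity)
            _ = C * y ^ (s.re + N) := by
                have h1 : s.re + ((N + 1 : ℕ) : ℝ) = (s.re + N) + 1 := by push_cast; ring
                rw [h1, Real.rpow_add_one (ne_of_gt hy0)]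
                field_simp
        · rw [hslope]
          have hvy : v y = 0 := by rw [hv]; simp only; rw [if_neg hy0]
          rw [hvy]
          simp only [smul_zero, norm_zero]
          positivity
      · have hev : v =ᶠ[𝓝 y] (fun z : ℝ => (z : ℂ) ^ s * u z) := by
          filter_upwards [Ioi_mem_nhds hy] with z hz
          rw [hv]; simp only; rw [if_pos (mem_Ioi.mp hz)]
        have h1 : HasDerivAt (fun z : ℝ => (z : ℂ) ^ s * u z)
            (s * (y : ℂ) ^ (s - 1) * u y + (y : ℂ) ^ s * deriv u y) y :=
          (hasDerivAt_real_cpow hy s).mul (hdiff y).hasDerivAt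
        have := h1.congr_of_eventuallyEq hev
        simpa [hv₁, if_pos hy] using this
    have hderiv_eq : deriv v = v₁ := funext fun y => (hder y).deriv
    -- apply the inductive hypothesis to the two pieces
    have hw1 : ContDiff ℝ (m : ℕ) (fun y : ℝ => if 0 < y then (y : ℂ) ^ (s - 1) * u y else 0) := by
      apply ih (N + 1) (s - 1) (by simp [Complex.sub_re]; linarith) u ?_ h0
      have hcast2 : ((N + 1 : ℕ) : WithTop ℕ∞) + (m : ℕ) = ((N : ℕ) : WithTop ℕ∞) + ((m + 1 : ℕ) : WithTop ℕ∞) := by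
        push_cast
        ring
      rw [hcast2]
      exact hu
    have hw2 : ContDiff ℝ (m : ℕ) (fun y : ℝ => if 0 < y then (y : ℂ) ^ s * deriv u y else 0) :=
      ih N s hs (deriv u) hd hd0
    have hv₁cd : ContDiff ℝ (m : ℕ) v₁ := by
      have : v₁ = fun y : ℝ =>
          s * (if 0 < y then (y : ℂ) ^ (s - 1) * u y else 0) +
          (if 0 < y then (y : ℂ) ^ s * deriv u y else 0) := by
        funext y
        rw [hv₁]
        by_cases hy : 0 < y
        · simp only [if_pos hy]; ring
        · simp only [if_neg hy]; ring
      rw [this]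
      exact (contDiff_const.mul hw1).add hw2
    have hcast : ((m + 1 : ℕ) : WithTop ℕ∞) = (m : WithTop ℕ∞) + 1 := by push_cast; rfl
    rw [hcast, contDiff_succ_iff_deriv]
    refine ⟨fun y => (hder y).differentiableAt, ?_, ?_⟩
    · intro h; exact absurd h (by simp)
    · rw [hderiv_eq]; exact hv₁cd

theorem cpow_mul_contDiff (k N : ℕ) (hN : N ≤ k) (s : ℂ) (hs : -(N : ℝ) < s.re)
    (u : ℝ → ℂ) (hu : ContDiff ℝ k u)
    (hsupp : ∀ y : ℝ, y ∉ Set.Icc (0 : ℝ) 1 → u y = 0) :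
    ContDiff ℝ (k - N : ℕ) (fun y : ℝ => if 0 < y then (y : ℂ) ^ s * u y else 0) := by
  have hlt : ∀ y < (0:ℝ), u y = 0 := fun y hy =>
    hsupp y (by simp [Set.mem_Icc]; intro h; linarith)
  have h0 : ∀ y ≤ (0:ℝ), u y = 0 := by
    intro y hy
    rcases lt_or_eq_of_le hy with hy' | hy'
    · exact hlt y hy'
    · subst hy'
      exact zero_at_zero hu.continuous.continuousAt hlt
  have hk : N + (k - N) = k := by omega
  apply main_lemma (k - N) N s hs u ?_ h0
  have hcast : ((N : ℕ) : WithTop ℕ∞) + ((k - N : ℕ) : WithTop ℕ∞) = ((k : ℕ) : WithTop ℕ∞) := by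
    rw [← Nat.cast_add, hk]
  rw [hcast]
  exact hu
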